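/- The function x ↦ KL(Ber(1/x) || Ber(1−l)) is monotonically increasing in x on the interval [1/(1−l), ∞), for fixed l ∈ (0,1). -/

import Mathlib

noncomputable def klBer (a b : ℝ) : ℝ :=
  a * Real.log (a / b) + (1 - a) * Real.log ((1 - a) / (1 - b))

lemma klBer_hasDerivAt (b : ℝ) (hb0 : 0 < b) (hb1 : b < 1) {a : ℝ} (ha0 : 0 < a)
    (ha1 : a < 1) :
    HasDerivAt (fun a => klBer a b)
      (Real.log a - Real.log b - Real.log (1 - a) + Real.log (1 - b)) a := by
  have h1a : (0:ℝ) < 1 - a := by linarith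
  have h1b : (0:ℝ) < 1 - b := by linarith
  have key : HasDerivAt
      (fun a : ℝ => a * Real.log a - a * Real.log b +
        ((1 - a) * Real.log (1 - a) - (1 - a) * Real.log (1 - b)))
      (Real.log a - Real.log b - Real.log (1 - a) + Real.log (1 - b)) a := by
    have h1 : HasDerivAt (fun a : ℝ => a * Real.log a) (Real.log a + 1) a :=
      Real.hasDerivAt_mul_log ha0.ne'
    have h2 : HasDerivAt (fun a : ℝ => a * Real.log b) (Real.log b) a := by
      simpa using (hasDerivAt_id a).mul_const (Real.log b)
    have hsub : HasDerivAt (fun a : ℝ => 1 - a) (-1) a := by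
      simpa using (hasDerivAt_id a).const_sub 1
    have h3 : HasDerivAt (fun a : ℝ => (1 - a) * Real.log (1 - a))
        ((Real.log (1 - a) + 1) * (-1)) a :=
      (Real.hasDerivAt_mul_log h1a.ne').comp a hsub
    have h4 : HasDerivAt (fun a : ℝ => (1 - a) * Real.log (1 - b))
        (-Real.log (1 - b)) a := by
      simpa using hsub.mul_const (Real.log (1 - b))
    have : HasDerivAt (fun a : ℝ => a * Real.log a - a * Real.log b +
          ((1 - a) * Real.log (1 - a) - (1 - a) * Real.log (1 - b)))
        (Real.log a + 1 - Real.log b + ((Real.log (1 - a) + 1) * -1 - -Real.log (1 - b))) a :=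
      ((h1.sub h2).add (h3.sub h4))
    convert this using 1
    ring
  apply key.congr_of_eventuallyEq
  have hmem : Set.Ioo (0:ℝ) 1 ∈ nhds a := (isOpen_Ioo).mem_nhds ⟨ha0, ha1⟩
  filter_upwards [hmem] with c hc
  simp only [klBer]
  rw [Real.log_div hc.1.ne' hb0.ne', Real.log_div (by linarith [hc.2] : (1:ℝ) - c ≠ 0) h1b.ne']
  ring

lemma klBer_antitoneOn (b : ℝ) (hb0 : 0 < b) (hb1 : b < 1) :
    AntitoneOn (fun a => klBer a b) (Set.Ioc 0 b) := by
  have h1b : (0:ℝ) < 1 - b := by linarith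
  apply antitoneOn_of_deriv_nonpos (convex_Ioc 0 b)
  · intro a ha
    obtain ⟨ha0, hab⟩ := ha
    have ha1 : a < 1 := lt_of_le_of_lt hab hb1
    exact (klBer_hasDerivAt b hb0 hb1 ha0 ha1).continuousAt.continuousWithinAt
  · rw [interior_Ioc]
    intro a ha
    exact (klBer_hasDerivAt b hb0 hb1 ha.1 (ha.2.trans hb1)).differentiableAt.differentiableWithinAt
  · rw [interior_Ioc]
    intro a ha
    obtain ⟨ha0, hab⟩ := ha
    have ha1 : a < 1 := hab.trans hb1
    have h1a : (0:ℝ) < 1 - a := by linarith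
    rw [(klBer_hasDerivAt b hb0 hb1 ha0 ha1).deriv]
    have hprod : a * (1 - b) ≤ b * (1 - a) := by nlinarith
    have hlog : Real.log (a * (1 - b)) ≤ Real.log (b * (1 - a)) :=
      Real.log_le_log (by positivity) hprod
    rw [Real.log_mul ha0.ne' h1b.ne', Real.log_mul hb0.ne' h1a.ne'] at hlog
    linarith

theorem klBer_inv_monotone (l : ℝ) (hl : 0 < l) (hl' : l < 1) :
    MonotoneOn (fun x : ℝ => klBer (1 / x) (1 - l)) (Set.Ici (1 / (1 - l))) := by
  have h1l : (0:ℝ) < 1 - l := by linarith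
  have hinv : (0:ℝ) < 1 / (1 - l) := by positivity
  intro x hx y hy hxy
  simp only [Set.mem_Ici] at hx hy
  have hx0 : 0 < x := lt_of_lt_of_le hinv hx
  have hy0 : 0 < y := lt_of_lt_of_le hinv hy
  have hmx : 1 / x ∈ Set.Ioc (0:ℝ) (1 - l) := by
    constructor
    · positivity
    · calc 1 / x ≤ 1 / (1 / (1 - l)) := one_div_le_one_div_of_le hinv hx
        _ = 1 - l := one_div_one_div _
  have hmy : 1 / y ∈ Set.Ioc (0:ℝ) (1 - l) := by
    constructor
    · positivity
    · calc 1 / y ≤ 1 / (1 / (1 - l)) := one_div_le_one_div_of_le hinv hy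
        _ = 1 - l := one_div_one_div _
  exact klBer_antitoneOn (1 - l) h1l (by linarith) hmy hmx
    (one_div_le_one_div_of_le hx0 hxy)
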